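/- Fix λ ∈ (0, λ₀) and r ∈ ℕ. There exist a constant K₂(λ,r) ≥ 1 and a threshold S(λ,r) ∈ ℕ, depending only on d, M₀, M₁, λ, r, with the following property. Suppose the pair (m₁,m₂) is (λ,r)-good for ω and m₂ − m₁ > S(λ,r). Then for every bounded φ : ℤ^d → [0,∞), not identically zero, with sup_{|x| > r} φ(x) ≤ sup_{|x| ≤ r} φ(x), and for all y₁, y₂ ∈ ℤ^d with |y₁| ≤ r and |y₂| ≤ r: 1/K₂(λ,r) ≤ (T^{m₁,m₂}(ω)φ)(y₁) / (T^{m₁,m₂}(ω)φ)(y₂) ≤ K₂(λ,r). -/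

import Mathlib

open MeasureTheory Filter

namespace BKpaper

abbrev X (d : ℕ) := Fin d → ℤ

/-- the max-norm |x| = max_i |x_i|, as a natural number -/
def nm {d : ℕ} (x : X d) : ℕ := Finset.univ.sup fun i => (x i).natAbs

/-- spin value of a boolean: `true ↦ 1`, `false ↦ -1` -/
def sgn (b : Bool) : ℝ := if b then 1 else -1

/-- ξ_m(ω) = M₀ if ω_m = 1, ξ_m(ω) = −M₁ if ω_m = −1 -/
def xi (M₀ M₁ : ℝ) (ω : ℤ → Bool) (m : ℤ) : ℝ := if ω m then M₀ else -M₁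

/-- one admissible step of the lazy random walk -/
def stepOK {d : ℕ} (x y : X d) : Prop := (∑ i, (y i - x i).natAbs) ≤ 1

/-- admissible path on the (discrete) interval [n₁, n₂] -/
def Adm {d : ℕ} (n₁ n₂ : ℤ) (γ : ℤ → X d) : Prop :=
  ∀ n : ℤ, n₁ ≤ n → n < n₂ → stepOK (γ n) (γ (n + 1))

/-- a path frozen outside [n₁,n₂]; used to represent a path on [n₁,n₂] by a
function on all of ℤ -/
def Frozen {d : ℕ} (n₁ n₂ : ℤ) (γ : ℤ → X d) : Prop :=
  (∀ n : ℤ, n ≤ n₁ → γ n = γ n₁) ∧ (∀ n : ℤ, n₂ ≤ n → γ n = γ n₂)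

/-- Φ_{n₁,n₂}(γ,ω) = Σ_{n=n₁+1}^{n₂} V(γ(n)) ω_n -/
noncomputable def Phi {d : ℕ} (V : X d → ℝ) (ω : ℤ → Bool) (n₁ n₂ : ℤ) (γ : ℤ → X d) : ℝ :=
  ∑ n ∈ Finset.Icc (n₁ + 1) n₂, V (γ n) * sgn (ω n)

/-- the Feynman–Kac operator T^{n₁,n₂}(ω) -/
noncomputable def T {d : ℕ} (V : X d → ℝ) (ω : ℤ → Bool) (n₁ n₂ : ℤ)
    (u : X d → ℝ) (x : X d) : ℝ :=
  ((2 * (d : ℝ) + 1) ^ (n₂ - n₁))⁻¹ *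
    ∑' γ : {γ : ℤ → X d // Adm n₁ n₂ γ ∧ Frozen n₁ n₂ γ ∧ γ n₂ = x},
      Real.exp (Phi V ω n₁ n₂ γ.1) * u (γ.1 n₁)

/-- the partition function Z_{n₁,n₂}(x₁,x₂) -/
noncomputable def Z {d : ℕ} (V : X d → ℝ) (ω : ℤ → Bool) (n₁ n₂ : ℤ) (x₁ x₂ : X d) : ℝ :=
  ∑' γ : {γ : ℤ → X d // Adm n₁ n₂ γ ∧ Frozen n₁ n₂ γ ∧ γ n₁ = x₁ ∧ γ n₂ = x₂},
    Real.exp (Phi V ω n₁ n₂ γ.1)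

/-- the class F(c): nonnegative bounded functions with sup φ ≤ c·φ(0) -/
def Fset (d : ℕ) (c : ℝ) : Set (X d → ℝ) :=
  {φ | (∀ x, 0 ≤ φ x) ∧ ∀ x, φ x ≤ c * φ 0}

/-- P is the i.i.d. Bernoulli(1/2) product measure on {−1,1}^ℤ ≃ ℤ → Bool -/
def IsBernoulli (P : Measure (ℤ → Bool)) : Prop :=
  IsProbabilityMeasure P ∧ ∀ (s : Finset ℤ) (f : ℤ → Bool),
    P {ω | ∀ i ∈ s, ω i = f i} = (1 / 2 : ENNReal) ^ s.card

/-- the shift θ^k -/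
def shift (k : ℤ) (ω : ℤ → Bool) : ℤ → Bool := fun n => ω (k + n)

/-- first standard basis vector e₁ of ℤ^d -/
def e1 (d : ℕ) : X d := fun i => if (i : ℕ) = 0 then 1 else 0

/-- the optimal path γ*: γ*_n = 0 if ω_n = 1, γ*_n = e₁ if ω_n = −1 -/
def gstar (d : ℕ) (ω : ℤ → Bool) : ℤ → X d := fun n => if ω n then 0 else e1 d

/-- the pair (m₁,m₂) is (λ,r)-good for ω -/
def Good (d : ℕ) (M₀ M₁ lam : ℝ) (r : ℕ) (m₁ m₂ : ℤ) (ω : ℤ → Bool) : Prop :=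
  m₁ < m₂ ∧
  (∀ j : ℤ, m₁ + 1 ≤ j → j ≤ m₁ + r → ω j = true) ∧
  (∀ k : ℕ, 1 ≤ k →
    (k : ℝ) * (M₁ + lam + Real.log (2 * (d : ℝ) + 1)) <
      ∑ j ∈ Finset.Icc (m₁ + r + 1) (m₁ + r + k), xi M₀ M₁ ω j) ∧
  (∀ j : ℤ, m₂ - r + 1 ≤ j → j ≤ m₂ → ω j = true) ∧
  (∀ k : ℕ, 1 ≤ k →
    (k : ℝ) * (M₁ + lam + Real.log (2 * (d : ℝ) + 1)) <
      ∑ j ∈ Finset.Icc (m₂ - r - k + 1) (m₂ - r), xi M₀ M₁ ω j)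

/-- the ball B_r ⊆ ℤ^d as a finite set -/
noncomputable def ball (d r : ℕ) : Finset (X d) := Fintype.piFinset fun _ => Finset.Icc (-(r : ℤ)) (r : ℤ)

lemma ball_nonempty (d r : ℕ) : (ball d r).Nonempty :=
  ⟨fun _ => 0, by simp [ball, Fintype.mem_piFinset]⟩

/-- the Hilbert projective (pseudo)metric ρ_r on functions restricted to B_r -/
noncomputable def rho (d r : ℕ) (φ ψ : X d → ℝ) : ℝ :=
  Real.log ((ball d r).sup' (ball_nonempty d r) (fun x => φ x / ψ x) *
            (ball d r).sup' (ball_nonempty d r) (fun x => ψ x / φ x))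

/-- diam_r of a set of functions w.r.t. ρ_r -/
noncomputable def diamr (d r : ℕ) (A : Set (X d → ℝ)) : ℝ :=
  sSup {y | ∃ φ ∈ A, ∃ ψ ∈ A, y = rho d r φ ψ}

/-- the set G(λ,r) (with K₁ explicit): φ ∈ F(2K₁) with sup_{|x|>r} φ ≤ sup_{|x|≤r} φ -/
def Gset (d : ℕ) (K₁ : ℝ) (r : ℕ) : Set (X d → ℝ) :=
  {φ | φ ∈ Fset d (2 * K₁) ∧ ∀ x, r < nm x → ∃ z, nm z ≤ r ∧ φ x ≤ φ z}

/-- the set H(λ,r) (with K₁, K₂ explicit) -/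
def Hset (d : ℕ) (K₁ K₂ : ℝ) (r : ℕ) : Set (X d → ℝ) :=
  {φ | φ ∈ Gset d K₁ r ∧ (⨆ x, φ x) = 1 ∧ ∀ y, nm y ≤ r → 1 / K₂ ≤ φ y}

/-- finite-volume Gibbs measure on [n₁,n₂] for ω (paths represented as
functions ℤ → ℤ^d frozen outside [n₁,n₂]) -/
def FVGibbs (d : ℕ) (V : X d → ℝ) (ω : ℤ → Bool) (n₁ n₂ : ℤ)
    (μ : Measure (ℤ → X d)) : Prop :=
  IsProbabilityMeasure μ ∧
  μ {γ | Adm n₁ n₂ γ ∧ Frozen n₁ n₂ γ} = 1 ∧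
  ∀ γ : ℤ → X d, Adm n₁ n₂ γ →
    μ {α | α n₁ = γ n₁ ∧ α n₂ = γ n₂} ≠ 0 →
    μ {α | ∀ n : ℤ, n₁ ≤ n → n ≤ n₂ → α n = γ n} =
      ENNReal.ofReal (Real.exp (Phi V ω n₁ n₂ γ) / Z V ω n₁ n₂ (γ n₁) (γ n₂)) *
        μ {α | α n₁ = γ n₁ ∧ α n₂ = γ n₂}

/-- (infinite-volume) Gibbs measure for ω -/
def GibbsMeasure (d : ℕ) (V : X d → ℝ) (ω : ℤ → Bool) (μ : Measure (ℤ → X d)) : Prop :=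
  IsProbabilityMeasure μ ∧
  μ {α | ∀ n : ℤ, stepOK (α n) (α (n + 1))} = 1 ∧
  ∀ n₁ n₂ : ℤ, n₁ < n₂ → ∀ γ : ℤ → X d, Adm n₁ n₂ γ →
    μ {α | α n₁ = γ n₁ ∧ α n₂ = γ n₂} ≠ 0 →
    μ {α | ∀ n : ℤ, n₁ ≤ n → n ≤ n₂ → α n = γ n} =
      ENNReal.ofReal (Real.exp (Phi V ω n₁ n₂ γ) / Z V ω n₁ n₂ (γ n₁) (γ n₂)) *
        μ {α | α n₁ = γ n₁ ∧ α n₂ = γ n₂}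

/-- the weak localization condition for a measure on two-sided paths -/
def WeakLoc (d : ℕ) (μ : Measure (ℤ → X d)) : Prop :=
  ∀ ε : ℝ, 0 < ε → ∃ r : ℕ,
    Filter.liminf (fun n : ℤ => μ {α | r < nm (α n)}) Filter.atTop < ENNReal.ofReal ε ∧
    Filter.liminf (fun n : ℤ => μ {α | r < nm (α n)}) Filter.atBot < ENNReal.ofReal ε

/-- normalized positive eigenfunction of the cocycle T -/
def IsEigen (d : ℕ) (V : X d → ℝ) (P : Measure (ℤ → Bool))
    (u : (ℤ → Bool) → X d → ℝ) : Prop :=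
  (∀ x : X d, Measurable fun ω => u ω x) ∧
  ∀ᵐ ω ∂P, (∀ x, 0 < u ω x) ∧ BddAbove (Set.range (u ω)) ∧ (⨆ x, u ω x) = 1 ∧
    ∃ κ : ℝ, 0 < κ ∧ ∀ x, T V ω 0 1 (u ω) x = κ * u (shift 1 ω) x



/-! ### Auxiliary development for statement4 -/

section Aux

variable {d : ℕ}

/-- the neighborhood of `x`: points `z` with `stepOK z x` -/
noncomputable def nbr (x : X d) : Finset (X d) :=
  (Fintype.piFinset fun i => Finset.Icc (x i - 1) (x i + 1)).filter
    fun z => (∑ i, (x i - z i).natAbs) ≤ 1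

lemma mem_nbr {x z : X d} : z ∈ nbr x ↔ stepOK z x := by
  constructor
  · intro h; exact (Finset.mem_filter.1 h).2
  · intro h
    refine Finset.mem_filter.2 ⟨?_, h⟩
    refine Fintype.mem_piFinset.2 fun i => ?_
    have h1 : (x i - z i).natAbs ≤ 1 :=
      le_trans (Finset.single_le_sum (f := fun j => (x j - z j).natAbs)
        (fun j _ => Nat.zero_le _) (Finset.mem_univ i)) h
    rw [Finset.mem_Icc]; omega

lemma self_mem_nbr (x : X d) : x ∈ nbr x := by
  refine mem_nbr.2 ?_
  show (∑ i, (x i - x i).natAbs) ≤ 1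
  simp

lemma stepOK_cases {x z : X d} (h : stepOK z x) (hne : z ≠ x) :
    ∃ i : Fin d, (z i - x i).natAbs = 1 ∧ ∀ j, j ≠ i → z j = x j := by
  have hex : ∃ i, z i ≠ x i := by
    by_contra hc; push_neg at hc; exact hne (funext hc)
  obtain ⟨i, hi⟩ := hex
  have hsum : (∑ j, (x j - z j).natAbs) ≤ 1 := h
  have hterm : 1 ≤ (x i - z i).natAbs := by omega
  have hothers : ∀ j, j ≠ i → (x j - z j).natAbs = 0 := by
    intro j hj
    by_contra hc
    have hs : ∑ k ∈ ({i, j} : Finset (Fin d)), (x k - z k).natAbs ≤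
        ∑ k, (x k - z k).natAbs :=
      Finset.sum_le_sum_of_subset (Finset.subset_univ _)
    rw [Finset.sum_pair (Ne.symm hj)] at hs
    omega
  have hle : (x i - z i).natAbs ≤ 1 :=
    le_trans (Finset.single_le_sum (f := fun j => (x j - z j).natAbs)
      (fun j _ => Nat.zero_le _) (Finset.mem_univ i)) hsum
  refine ⟨i, by omega, fun j hj => ?_⟩
  have := hothers j hj; omega

lemma card_nbr_le (x : X d) : (nbr x).card ≤ 2 * d + 1 := by
  classical
  have hsub : nbr x ⊆ insert x (Finset.image
      (fun p : Fin d × Bool => Function.update x p.1 (x p.1 + if p.2 then 1 else -1))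
      Finset.univ) := by
    intro z hz
    rcases eq_or_ne z x with rfl | hne
    · exact Finset.mem_insert_self _ _
    · obtain ⟨i, hi1, hi2⟩ := stepOK_cases (mem_nbr.1 hz) hne
      refine Finset.mem_insert_of_mem (Finset.mem_image.2
        ⟨(i, decide (x i < z i)), Finset.mem_univ _, ?_⟩)
      funext j
      rcases eq_or_ne j i with rfl | hj
      · simp only [Function.update_self, decide_eq_true_eq]
        split_ifs with hlt <;> omega
      · rw [Function.update_of_ne hj]; exact (hi2 j hj).symm
  calc (nbr x).card ≤ _ := Finset.card_le_card hsub
    _ ≤ (Finset.image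
      (fun p : Fin d × Bool => Function.update x p.1 (x p.1 + if p.2 then 1 else -1))
      Finset.univ).card + 1 := Finset.card_insert_le _ _
    _ ≤ (Finset.univ : Finset (Fin d × Bool)).card + 1 := by
        have := Finset.card_image_le (s := (Finset.univ : Finset (Fin d × Bool)))
          (f := fun p : Fin d × Bool => Function.update x p.1 (x p.1 + if p.2 then 1 else -1))
        omega
    _ = 2 * d + 1 := by simp [Finset.card_univ]; ring

/-- the transfer-operator iterates: sum over paths of length `k` ending at `x`
at time `m₁ + k`, of the exponential weight times `u` at the start point. -/
noncomputable def Sfun (V : X d → ℝ) (ω : ℤ → Bool) (m₁ : ℤ) :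
    ℕ → (X d → ℝ) → X d → ℝ
  | 0, u, x => u x
  | (k+1), u, x => Real.exp (V x * sgn (ω (m₁ + k + 1))) * ∑ z ∈ nbr x, Sfun V ω m₁ k u z

variable {V : X d → ℝ} {ω : ℤ → Bool} {m₁ : ℤ} {u : X d → ℝ}

lemma Sfun_nonneg (hu : ∀ x, 0 ≤ u x) : ∀ (k : ℕ) (x : X d), 0 ≤ Sfun V ω m₁ k u x
  | 0, x => hu x
  | (k+1), x => mul_nonneg (Real.exp_pos _).le
      (Finset.sum_nonneg fun z _ => Sfun_nonneg hu k z)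

lemma Sfun_succ_ge (hu : ∀ x, 0 ≤ u x) {k : ℕ} {x z : X d} (hz : z ∈ nbr x) :
    Real.exp (V x * sgn (ω (m₁ + k + 1))) * Sfun V ω m₁ k u z ≤
      Sfun V ω m₁ (k+1) u x := by
  show _ ≤ Real.exp (V x * sgn (ω (m₁ + k + 1))) * ∑ z ∈ nbr x, Sfun V ω m₁ k u z
  refine mul_le_mul_of_nonneg_left ?_ (Real.exp_pos _).le
  exact Finset.single_le_sum (fun z _ => Sfun_nonneg hu k z) hz

lemma Sfun_succ_le (hu : ∀ x, 0 ≤ u x) {k : ℕ} {x : X d} {C W : ℝ} (hC : 0 ≤ C)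
    (hb : ∀ z, Sfun V ω m₁ k u z ≤ C)
    (hw : V x * sgn (ω (m₁ + k + 1)) ≤ W) :
    Sfun V ω m₁ (k+1) u x ≤ (2 * d + 1) * Real.exp W * C := by
  show Real.exp (V x * sgn (ω (m₁ + k + 1))) * ∑ z ∈ nbr x, Sfun V ω m₁ k u z ≤ _
  have hsum : ∑ z ∈ nbr x, Sfun V ω m₁ k u z ≤ (2 * d + 1) * C := by
    calc ∑ z ∈ nbr x, Sfun V ω m₁ k u z ≤ (nbr x).card • C :=
          Finset.sum_le_card_nsmul _ _ _ (fun z _ => hb z)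
      _ = ((nbr x).card : ℝ) * C := nsmul_eq_mul _ _
      _ ≤ (2 * d + 1) * C := by
          refine mul_le_mul_of_nonneg_right ?_ hC
          exact_mod_cast card_nbr_le x
  calc Real.exp (V x * sgn (ω (m₁ + k + 1))) * ∑ z ∈ nbr x, Sfun V ω m₁ k u z
      ≤ Real.exp W * ((2 * d + 1) * C) := by
        refine mul_le_mul (Real.exp_le_exp.2 hw) hsum
          (Finset.sum_nonneg fun z _ => Sfun_nonneg hu k z) (Real.exp_pos _).le
    _ = (2 * d + 1) * Real.exp W * C := by ring

end Aux

section Weights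

variable {d : ℕ} {V : X d → ℝ} {ω : ℤ → Bool} {m₁ : ℤ} {u : X d → ℝ} {M₀ M₁ : ℝ}

lemma e1_ne_zero (hd : 1 ≤ d) : e1 d ≠ 0 := by
  intro h
  have := congrFun h ⟨0, hd⟩
  simp [e1] at this

lemma natAbs_e1_le (hd : 1 ≤ d) : ∑ i, ((e1 d) i).natAbs ≤ 1 := by
  have h : ∀ i : Fin d, ((e1 d) i).natAbs = if i = (⟨0, hd⟩ : Fin d) then 1 else 0 := by
    intro i
    by_cases h : (i : ℕ) = 0
    · have hi : i = (⟨0, hd⟩ : Fin d) := Fin.ext h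
      simp [e1, h, hi]
    · have hi : i ≠ (⟨0, hd⟩ : Fin d) := by
        intro he; exact h (by rw [he])
      simp [e1, h, hi]
  rw [Finset.sum_congr rfl (fun i _ => h i)]
  simp

lemma stepOK_gstar (hd : 1 ≤ d) (n n' : ℤ) : stepOK (gstar d ω n) (gstar d ω n') := by
  show (∑ i, ((gstar d ω n') i - (gstar d ω n) i).natAbs) ≤ 1
  calc ∑ i, ((gstar d ω n') i - (gstar d ω n) i).natAbs
      ≤ ∑ i, ((e1 d) i).natAbs := by
        refine Finset.sum_le_sum fun i _ => ?_
        unfold gstar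
        split_ifs <;> simp <;> omega
    _ ≤ 1 := natAbs_e1_le hd

lemma gstar_mem_nbr (hd : 1 ≤ d) (n n' : ℤ) :
    gstar d ω n ∈ nbr (gstar d ω n') := mem_nbr.2 (stepOK_gstar hd n n')

lemma absV_le_M0 (hV0 : V 0 = M₀) (hV1 : ∀ x : X d, x ≠ 0 → |V x| ≤ M₁)
    (hM0 : 0 ≤ M₀) (hM10 : M₁ ≤ M₀) (x : X d) : |V x| ≤ M₀ := by
  rcases eq_or_ne x 0 with rfl | hx
  · rw [hV0, abs_of_nonneg hM0]
  · exact le_trans (hV1 x hx) hM10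

lemma weight_ge_negM0 (hVabs : ∀ x : X d, |V x| ≤ M₀) (x : X d) (b : Bool) :
    -M₀ ≤ V x * sgn b := by
  have := abs_le.1 (hVabs x)
  cases b <;> simp [sgn] <;> linarith [this.1, this.2]

lemma weight_le_M0 (hVabs : ∀ x : X d, |V x| ≤ M₀) (x : X d) (b : Bool) :
    V x * sgn b ≤ M₀ := by
  have := abs_le.1 (hVabs x)
  cases b <;> simp [sgn] <;> linarith [this.1, this.2]

lemma weight_le_M1 (hV0 : V 0 = M₀) (hV1 : ∀ x : X d, x ≠ 0 → |V x| ≤ M₁)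
    (hM0 : 0 ≤ M₀) (hM1 : 0 ≤ M₁) {n : ℤ} {x : X d} (hx : x ≠ gstar d ω n) :
    V x * sgn (ω n) ≤ M₁ := by
  cases hω : ω n with
  | true =>
      have hx0 : x ≠ 0 := by simpa [gstar, hω] using hx
      have := abs_le.1 (hV1 x hx0)
      simp [sgn, hω]; linarith [this.2]
  | false =>
      have hxe : x ≠ e1 d := by simpa [gstar, hω] using hx
      rcases eq_or_ne x 0 with rfl | hx0
      · simp [sgn, hω, hV0]; linarith
      · have := abs_le.1 (hV1 x hx0)
        simp [sgn, hω]; linarith [this.1]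

lemma weight_gstar_ge (hd : 1 ≤ d) (hV0 : V 0 = M₀)
    (hV1 : ∀ x : X d, x ≠ 0 → |V x| ≤ M₁) (n : ℤ) :
    xi M₀ M₁ ω n ≤ V (gstar d ω n) * sgn (ω n) := by
  cases hω : ω n with
  | true => simp [xi, gstar, sgn, hω, hV0]
  | false =>
      have := abs_le.1 (hV1 (e1 d) (e1_ne_zero hd))
      simp [xi, gstar, sgn, hω]
      linarith [this.2]

/-- chain lower bound along the optimal path `gstar` -/
lemma Sfun_gstar_chain (hd : 1 ≤ d) (hu : ∀ x, 0 ≤ u x) (hV0 : V 0 = M₀)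
    (hV1 : ∀ x : X d, x ≠ 0 → |V x| ≤ M₁) (j : ℕ) :
    ∀ k : ℕ, j ≤ k →
      Real.exp (∑ n ∈ Finset.Icc (j+1) k, xi M₀ M₁ ω (m₁ + n)) *
          Sfun V ω m₁ j u (gstar d ω (m₁ + j)) ≤
        Sfun V ω m₁ k u (gstar d ω (m₁ + k)) := by
  intro k hk
  induction k, hk using Nat.le_induction with
  | base => simp
  | succ k hk ih =>
      have hc : (m₁ + ((k + 1 : ℕ) : ℤ)) = m₁ + (k : ℤ) + 1 := by push_cast; ring
      rw [hc]
      have hsum : ∑ n ∈ Finset.Icc (j+1) (k+1), xi M₀ M₁ ω (m₁ + n) =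
          (∑ n ∈ Finset.Icc (j+1) k, xi M₀ M₁ ω (m₁ + n)) + xi M₀ M₁ ω (m₁ + (k : ℤ) + 1) := by
        rw [Finset.sum_Icc_succ_top (by omega)]
        push_cast; ring_nf
      have hstep : Real.exp (V (gstar d ω (m₁ + (k : ℤ) + 1)) * sgn (ω (m₁ + (k : ℤ) + 1))) *
          Sfun V ω m₁ k u (gstar d ω (m₁ + k)) ≤
            Sfun V ω m₁ (k+1) u (gstar d ω (m₁ + (k : ℤ) + 1)) := by
        have hnbr : gstar d ω (m₁ + k) ∈ nbr (gstar d ω (m₁ + (k : ℤ) + 1)) :=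
          gstar_mem_nbr hd _ _
        exact Sfun_succ_ge hu hnbr
      rw [hsum, Real.exp_add]
      calc Real.exp (∑ n ∈ Finset.Icc (j+1) k, xi M₀ M₁ ω (m₁ + n)) *
              Real.exp (xi M₀ M₁ ω (m₁ + (k : ℤ) + 1)) *
              Sfun V ω m₁ j u (gstar d ω (m₁ + j))
          = Real.exp (xi M₀ M₁ ω (m₁ + (k : ℤ) + 1)) *
              (Real.exp (∑ n ∈ Finset.Icc (j+1) k, xi M₀ M₁ ω (m₁ + n)) *
                Sfun V ω m₁ j u (gstar d ω (m₁ + j))) := by ring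
        _ ≤ Real.exp (xi M₀ M₁ ω (m₁ + (k : ℤ) + 1)) * Sfun V ω m₁ k u (gstar d ω (m₁ + k)) := by
            exact mul_le_mul_of_nonneg_left ih (Real.exp_pos _).le
        _ ≤ Real.exp (V (gstar d ω (m₁ + (k : ℤ) + 1)) * sgn (ω (m₁ + (k : ℤ) + 1))) *
              Sfun V ω m₁ k u (gstar d ω (m₁ + k)) := by
            refine mul_le_mul_of_nonneg_right ?_ (Sfun_nonneg hu _ _)
            exact Real.exp_le_exp.2 (weight_gstar_ge hd hV0 hV1 (m₁ + (k : ℤ) + 1))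
        _ ≤ _ := hstep

/-- moving to any point at ℓ¹ distance `k` costs at most `e^{-k M₀}` -/
lemma Sfun_dist (hu : ∀ x, 0 ≤ u x) (hVabs : ∀ x : X d, |V x| ≤ M₀) :
    ∀ (k : ℕ) (j : ℕ) (z w : X d), (∑ i, (w i - z i).natAbs) ≤ k →
      Real.exp (-(k : ℝ) * M₀) * Sfun V ω m₁ j u z ≤ Sfun V ω m₁ (j + k) u w := by
  intro k
  induction k with
  | zero =>
      intro j z w hzw
      have : w = z := by
        funext i
        have : (w i - z i).natAbs = 0 := by
          have h2 : (w i - z i).natAbs ≤ ∑ i, (w i - z i).natAbs := by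
            simpa using Finset.single_le_sum (f := fun i => (w i - z i).natAbs)
              (fun i _ => Nat.zero_le _) (Finset.mem_univ i)
          omega
        omega
      subst this
      simp
  | succ k ih =>
      intro j z w hzw
      by_cases hle : (∑ i, (w i - z i).natAbs) ≤ k
      · have h1 := ih j z w hle
        have h2 : Real.exp (V w * sgn (ω (m₁ + (j + k) + 1))) * Sfun V ω m₁ (j + k) u w ≤
            Sfun V ω m₁ ((j + k) + 1) u w := Sfun_succ_ge hu (self_mem_nbr w)
        have h3 : Real.exp (-(M₀ : ℝ)) ≤ Real.exp (V w * sgn (ω (m₁ + (j + k) + 1))) :=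
          Real.exp_le_exp.2 (weight_ge_negM0 hVabs _ _)
        have hrw : j + (k + 1) = (j + k) + 1 := by omega
        rw [hrw, show (-(((k+1) : ℕ) : ℝ) * M₀) = -M₀ + (-(k : ℝ) * M₀) by push_cast; ring,
          Real.exp_add, mul_assoc]
        calc Real.exp (-(M₀ : ℝ)) * (Real.exp (-(k : ℝ) * M₀) * Sfun V ω m₁ j u z)
            ≤ Real.exp (-(M₀ : ℝ)) * Sfun V ω m₁ (j + k) u w :=
              mul_le_mul_of_nonneg_left h1 (Real.exp_pos _).le
          _ ≤ Real.exp (V w * sgn (ω (m₁ + (j + k) + 1))) * Sfun V ω m₁ (j + k) u w :=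
              mul_le_mul_of_nonneg_right h3 (Sfun_nonneg hu _ _)
          _ ≤ _ := h2
      · -- the distance is exactly k+1; move one step from w towards z
        have hex : ∃ i : Fin d, 1 ≤ (w i - z i).natAbs := by
          by_contra hc
          push_neg at hc
          have : (∑ i, (w i - z i).natAbs) = 0 :=
            Finset.sum_eq_zero fun i _ => by have := hc i; omega
          omega
        obtain ⟨i, hi⟩ := hex
        set w' : X d := Function.update w i (if z i < w i then w i - 1 else w i + 1) with hw'
        have hw'i : w' i = if z i < w i then w i - 1 else w i + 1 := by
          rw [hw', Function.update_self]
        have hw'j : ∀ j, j ≠ i → w' j = w j := fun j hj => Function.update_of_ne hj _ _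
        have hnbr : w' ∈ nbr w := by
          refine mem_nbr.2 ?_
          show (∑ j, (w j - w' j).natAbs) ≤ 1
          have : ∀ j : Fin d, j ≠ i → (w j - w' j).natAbs = 0 := by
            intro j hj; rw [hw'j j hj]; omega
          rw [Finset.sum_eq_single_of_mem i (Finset.mem_univ i) (fun j _ hj => this j hj)]
          rw [hw'i]
          split_ifs <;> omega
        have hdist : (∑ j, (w' j - z j).natAbs) ≤ k := by
          have hkey : (w' i - z i).natAbs + 1 = (w i - z i).natAbs := by
            rw [hw'i]
            rcases lt_or_ge (z i) (w i) with h | h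
            · rw [if_pos h]; omega
            · rw [if_neg (not_lt.2 h)]; omega
          have hsplit1 : (∑ j, (w' j - z j).natAbs) =
              (w' i - z i).natAbs + ∑ j ∈ Finset.univ.erase i, (w' j - z j).natAbs :=
            (Finset.add_sum_erase _ _ (Finset.mem_univ i)).symm
          have hsplit2 : (∑ j, (w j - z j).natAbs) =
              (w i - z i).natAbs + ∑ j ∈ Finset.univ.erase i, (w j - z j).natAbs :=
            (Finset.add_sum_erase _ _ (Finset.mem_univ i)).symm
          have heq : ∑ j ∈ Finset.univ.erase i, (w' j - z j).natAbs =
              ∑ j ∈ Finset.univ.erase i, (w j - z j).natAbs := by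
            refine Finset.sum_congr rfl fun j hj => ?_
            rw [hw'j j (Finset.ne_of_mem_erase hj)]
          omega
        have h1 := ih j z w' hdist
        have h2 : Real.exp (V w * sgn (ω (m₁ + (j + k) + 1))) * Sfun V ω m₁ (j + k) u w' ≤
            Sfun V ω m₁ ((j + k) + 1) u w := Sfun_succ_ge hu hnbr
        have h3 : Real.exp (-(M₀ : ℝ)) ≤ Real.exp (V w * sgn (ω (m₁ + (j + k) + 1))) :=
          Real.exp_le_exp.2 (weight_ge_negM0 hVabs _ _)
        have hrw : j + (k + 1) = (j + k) + 1 := by omega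
        rw [hrw, show (-(((k+1) : ℕ) : ℝ) * M₀) = -M₀ + (-(k : ℝ) * M₀) by push_cast; ring,
          Real.exp_add, mul_assoc]
        calc Real.exp (-(M₀ : ℝ)) * (Real.exp (-(k : ℝ) * M₀) * Sfun V ω m₁ j u z)
            ≤ Real.exp (-(M₀ : ℝ)) * Sfun V ω m₁ (j + k) u w' :=
              mul_le_mul_of_nonneg_left h1 (Real.exp_pos _).le
          _ ≤ Real.exp (V w * sgn (ω (m₁ + (j + k) + 1))) * Sfun V ω m₁ (j + k) u w' :=
              mul_le_mul_of_nonneg_right h3 (Sfun_nonneg hu _ _)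
          _ ≤ _ := h2

end Weights

section Upper

variable {d : ℕ} {V : X d → ℝ} {ω : ℤ → Bool} {m₁ : ℤ} {u : X d → ℝ} {M₀ M₁ : ℝ}

/-- pointwise upper bound: total mass controlled by the mass on the optimal path -/
lemma Sfun_upper1 (hV0 : V 0 = M₀)
    (hV1 : ∀ x : X d, x ≠ 0 → |V x| ≤ M₁) (hM0 : 0 ≤ M₀) (hM1 : 0 ≤ M₁)
    (hu : ∀ x, 0 ≤ u x) {c₀ : ℝ} (hc₀ : 0 ≤ c₀) (hub : ∀ x, u x ≤ c₀) :
    ∀ (k : ℕ) (x : X d),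
      Sfun V ω m₁ k u x ≤ c₀ * ((2*(d:ℝ)+1) * Real.exp M₁) ^ k +
        ∑ j ∈ Finset.Icc 1 k, ((2*(d:ℝ)+1) * Real.exp M₁) ^ (k - j) *
          Sfun V ω m₁ j u (gstar d ω (m₁ + j)) := by
  set β : ℝ := (2*(d:ℝ)+1) * Real.exp M₁ with hβ
  have hβ0 : 0 ≤ β := by positivity
  intro k
  induction k with
  | zero => intro x; simpa [Sfun] using hub x
  | succ k ih =>
      intro x
      have hR0 : 0 ≤ c₀ * β ^ k +
          ∑ j ∈ Finset.Icc 1 k, β ^ (k - j) * Sfun V ω m₁ j u (gstar d ω (m₁ + j)) :=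
        add_nonneg (mul_nonneg hc₀ (pow_nonneg hβ0 _))
          (Finset.sum_nonneg fun j _ => mul_nonneg (pow_nonneg hβ0 _) (Sfun_nonneg hu _ _))
      have hsum : ∑ j ∈ Finset.Icc 1 (k+1), β ^ (k+1-j) * Sfun V ω m₁ j u (gstar d ω (m₁ + j)) =
          β * (∑ j ∈ Finset.Icc 1 k, β ^ (k-j) * Sfun V ω m₁ j u (gstar d ω (m₁ + j))) +
            Sfun V ω m₁ (k+1) u (gstar d ω (m₁ + ((k+1 : ℕ) : ℤ))) := by
        rw [Finset.sum_Icc_succ_top (by omega), Finset.mul_sum]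
        congr 1
        · refine Finset.sum_congr rfl fun j hj => ?_
          have hj' : j ≤ k := (Finset.mem_Icc.1 hj).2
          have he : k + 1 - j = (k - j) + 1 := by omega
          rw [he, pow_succ]; ring
        · simp
      by_cases hx : x = gstar d ω (m₁ + ((k+1 : ℕ) : ℤ))
      · rw [hsum, hx]
        have h1 : 0 ≤ c₀ * β ^ (k+1) := mul_nonneg hc₀ (pow_nonneg hβ0 _)
        have h2 : 0 ≤ β * ∑ j ∈ Finset.Icc 1 k, β ^ (k - j) *
            Sfun V ω m₁ j u (gstar d ω (m₁ + j)) := by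
          refine mul_nonneg hβ0 (Finset.sum_nonneg fun j _ =>
            mul_nonneg (pow_nonneg hβ0 _) (Sfun_nonneg hu _ _))
        linarith
      · have hx' : x ≠ gstar d ω (m₁ + (k : ℤ) + 1) := by
          rwa [show m₁ + (k : ℤ) + 1 = m₁ + ((k+1 : ℕ) : ℤ) by push_cast; ring]
        have hw : V x * sgn (ω (m₁ + k + 1)) ≤ M₁ :=
          weight_le_M1 hV0 hV1 hM0 hM1 hx'
        have hle := Sfun_succ_le hu hR0 (fun z => ih z) hw
        rw [hsum]
        have hG : 0 ≤ Sfun V ω m₁ (k+1) u (gstar d ω (m₁ + ((k+1 : ℕ) : ℤ))) :=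
          Sfun_nonneg hu _ _
        calc Sfun V ω m₁ (k+1) u x
            ≤ (2*(d:ℝ)+1) * Real.exp M₁ * (c₀ * β ^ k +
              ∑ j ∈ Finset.Icc 1 k, β ^ (k - j) * Sfun V ω m₁ j u (gstar d ω (m₁ + j))) := hle
          _ = c₀ * β ^ (k+1) + β * ∑ j ∈ Finset.Icc 1 k, β ^ (k - j) *
              Sfun V ω m₁ j u (gstar d ω (m₁ + j)) := by rw [← hβ]; ring
          _ ≤ _ := by linarith

lemma Sfun_upper2 (hu : ∀ x, 0 ≤ u x) (hVabs : ∀ x : X d, |V x| ≤ M₀)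
    {K : ℕ} {U : ℝ} (hU : 0 ≤ U) (hK : ∀ x, Sfun V ω m₁ K u x ≤ U) :
    ∀ (k : ℕ) (x : X d),
      Sfun V ω m₁ (K + k) u x ≤ ((2*(d:ℝ)+1) * Real.exp M₀) ^ k * U := by
  intro k
  induction k with
  | zero => intro x; simpa using hK x
  | succ k ih =>
      intro x
      have hw : V x * sgn (ω (m₁ + (K + k) + 1)) ≤ M₀ := weight_le_M0 hVabs _ _
      have hC : 0 ≤ ((2*(d:ℝ)+1) * Real.exp M₀) ^ k * U :=
        mul_nonneg (by positivity) hU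
      have h := Sfun_succ_le (k := K + k) hu hC ih hw
      rw [show K + (k+1) = (K + k) + 1 by omega]
      calc Sfun V ω m₁ ((K+k)+1) u x
          ≤ (2*(d:ℝ)+1) * Real.exp M₀ * (((2*(d:ℝ)+1) * Real.exp M₀) ^ k * U) := h
        _ = ((2*(d:ℝ)+1) * Real.exp M₀) ^ (k+1) * U := by ring

end Upper

section SmallAux

lemma geom_bound {x : ℝ} (hx0 : 0 ≤ x) (hx1 : x < 1) (n : ℕ) :
    ∑ i ∈ Finset.range n, x ^ i ≤ (1 - x)⁻¹ := by
  have hpos : 0 < 1 - x := by linarith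
  rw [inv_eq_one_div, le_div_iff₀ hpos]
  nlinarith [geom_sum_mul x n, pow_nonneg hx0 n]

lemma sum_shift (f : ℤ → ℝ) (m₁ : ℤ) (a b : ℕ) :
    ∑ n ∈ Finset.Icc a b, f (m₁ + n) = ∑ i ∈ Finset.Icc (m₁ + a) (m₁ + b), f i := by
  refine Finset.sum_nbij' (fun n => m₁ + (n : ℤ)) (fun z => (z - m₁).toNat) ?_ ?_ ?_ ?_ ?_
  · intro n hn
    simp only [Finset.mem_Icc] at hn ⊢
    omega
  · intro z hz
    simp only [Finset.mem_Icc] at hz ⊢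
    omega
  · intro n hn
    show ((m₁ + (n : ℤ)) - m₁).toNat = n
    omega
  · intro z hz
    simp only [Finset.mem_Icc] at hz
    show m₁ + (((z - m₁).toNat : ℕ) : ℤ) = z
    omega
  · intro n hn; rfl

lemma Icc_shift_Ioc (a b : ℤ) : Finset.Icc (a + 1) b = Finset.Ioc a b := by
  ext z; simp only [Finset.mem_Icc, Finset.mem_Ioc]; omega

lemma sum_xi_le {M₀ M₁ : ℝ} {ω : ℤ → Bool} (hM0 : 0 ≤ M₀) (hM1 : 0 ≤ M₁)
    {a b : ℤ} (hab : a ≤ b) :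
    ∑ i ∈ Finset.Ioc a b, xi M₀ M₁ ω i ≤ ((b - a : ℤ) : ℝ) * M₀ := by
  have hcard : (((Finset.Ioc a b).card : ℕ) : ℝ) = ((b - a : ℤ) : ℝ) := by
    rw [Int.card_Ioc]
    norm_cast
    omega
  calc ∑ i ∈ Finset.Ioc a b, xi M₀ M₁ ω i ≤ (Finset.Ioc a b).card • M₀ := by
        refine Finset.sum_le_card_nsmul _ _ _ fun i _ => ?_
        unfold xi; split_ifs <;> linarith
    _ = (((Finset.Ioc a b).card : ℕ) : ℝ) * M₀ := nsmul_eq_mul _ _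
    _ = ((b - a : ℤ) : ℝ) * M₀ := by rw [hcard]

end SmallAux

section Bridge

attribute [local instance] Classical.propDecidable

variable {d : ℕ}

/-- the extension of a path on `[m₁, m]` to a path on `[m₁, m+1]` ending at `x` -/
def pext (m : ℤ) (x : X d) (γ : ℤ → X d) : ℤ → X d :=
  fun n => if n ≤ m then γ n else x

/-- explicit finite set of frozen admissible paths on `[m₁, m₁+k]` ending at `x` -/
noncomputable def Pfin (m₁ : ℤ) : ℕ → X d → Finset (ℤ → X d)
  | 0, x => {fun _ => x}
  | (k+1), x => (nbr x).biUnion fun z => (Pfin m₁ k z).image (pext (m₁ + k) x)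

lemma mem_Pfin (m₁ : ℤ) : ∀ (k : ℕ) (x : X d) (γ : ℤ → X d),
    γ ∈ Pfin m₁ k x ↔
      (Adm m₁ (m₁ + k) γ ∧ Frozen m₁ (m₁ + k) γ ∧ γ (m₁ + k) = x) := by
  intro k
  induction k with
  | zero =>
      intro x γ
      have h0 : (m₁ + ((0:ℕ) : ℤ)) = m₁ := by simp
      rw [h0]
      constructor
      · intro h
        have hγ : γ = fun _ => x := Finset.mem_singleton.1 h
        subst hγ
        refine ⟨fun n h1 h2 => absurd h2 (by omega), ⟨fun n _ => rfl, fun n _ => rfl⟩, rfl⟩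
      · rintro ⟨hA, hF, hE⟩
        refine Finset.mem_singleton.2 (funext fun n => ?_)
        rcases le_or_gt n m₁ with h | h
        · rw [hF.1 n h, hE]
        · rw [hF.2 n h.le, hE]
  | succ k ih =>
      intro x γ
      have hc : (m₁ + ((k+1 : ℕ) : ℤ)) = m₁ + (k : ℤ) + 1 := by push_cast; ring
      rw [hc]
      show γ ∈ (nbr x).biUnion (fun z => (Pfin m₁ k z).image (pext (m₁ + k) x)) ↔ _
      rw [Finset.mem_biUnion]
      constructor
      · rintro ⟨z, hz, hγ⟩
        obtain ⟨γ', hγ', rfl⟩ := Finset.mem_image.1 hγ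
        obtain ⟨hA', hF', hE'⟩ := (ih z γ').1 hγ'
        have hstep : stepOK z x := mem_nbr.1 hz
        refine ⟨?_, ⟨?_, ?_⟩, ?_⟩
        · intro n h1 h2
          by_cases hn : n + 1 ≤ m₁ + k
          · have e1 : pext (m₁ + k) x γ' n = γ' n := if_pos (by omega)
            have e2 : pext (m₁ + k) x γ' (n+1) = γ' (n+1) := if_pos hn
            rw [e1, e2]
            exact hA' n h1 (by omega)
          · have hn' : n = m₁ + k := by omega
            have e1 : pext (m₁ + k) x γ' n = γ' n := if_pos (by omega)
            have e2 : pext (m₁ + k) x γ' (n+1) = x := if_neg (by omega)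
            rw [e1, e2, hn', hE']
            exact hstep
        · intro n hn
          have e1 : pext (m₁ + k) x γ' n = γ' n := if_pos (by omega)
          have e2 : pext (m₁ + k) x γ' m₁ = γ' m₁ := if_pos (by omega)
          rw [e1, e2, hF'.1 n hn]
        · intro n hn
          have e1 : pext (m₁ + k) x γ' n = x := if_neg (by omega)
          have e2 : pext (m₁ + k) x γ' (m₁ + (k : ℤ) + 1) = x := if_neg (by omega)
          rw [e1, e2]
        · exact if_neg (by omega)
      · rintro ⟨hA, hF, hE⟩
        refine ⟨γ (m₁ + k), ?_, ?_⟩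
        · refine mem_nbr.2 ?_
          have := hA (m₁ + k) (by omega) (by omega)
          rwa [show (m₁ + (k:ℤ)) + 1 = m₁ + (k:ℤ) + 1 by ring, hE] at this
        · refine Finset.mem_image.2 ⟨fun n => if n ≤ m₁ + k then γ n else γ (m₁ + k), ?_, ?_⟩
          · refine (ih _ _).2 ⟨?_, ⟨?_, ?_⟩, ?_⟩
            · intro n h1 h2
              dsimp only
              have e1 : (if n ≤ m₁ + (k:ℤ) then γ n else γ (m₁ + (k:ℤ))) = γ n :=
                if_pos (by omega)
              have e2 : (if n + 1 ≤ m₁ + (k:ℤ) then γ (n+1) else γ (m₁ + (k:ℤ))) = γ (n+1) :=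
                if_pos (by omega)
              rw [e1, e2]
              exact hA n h1 (by omega)
            · intro n hn
              dsimp only
              have e1 : (if n ≤ m₁ + (k:ℤ) then γ n else γ (m₁ + (k:ℤ))) = γ n :=
                if_pos (by omega)
              have e2 : (if m₁ ≤ m₁ + (k:ℤ) then γ m₁ else γ (m₁ + (k:ℤ))) = γ m₁ :=
                if_pos (by omega)
              rw [e1, e2, hF.1 n hn]
            · intro n hn
              dsimp only
              by_cases h : n ≤ m₁ + (k:ℤ)
              · have hn' : n = m₁ + k := by omega
                rw [hn']
              · have e1 : (if n ≤ m₁ + (k:ℤ) then γ n else γ (m₁ + (k:ℤ))) = γ (m₁ + (k:ℤ)) :=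
                  if_neg h
                rw [e1]
                simp
            · simp
          · funext n
            by_cases h : n ≤ m₁ + (k:ℤ)
            · have e1 : pext (m₁ + k) x (fun n => if n ≤ m₁ + (k:ℤ) then γ n else γ (m₁ + (k:ℤ))) n
                  = γ n := by
                rw [pext, if_pos h]
                exact if_pos h
              rw [e1]
            · have e1 : pext (m₁ + k) x (fun n => if n ≤ m₁ + (k:ℤ) then γ n else γ (m₁ + (k:ℤ))) n
                  = x := by rw [pext, if_neg h]
              rw [e1, hF.2 n (by omega), hE]

lemma Icc_int_succ_top {a b : ℤ} (h : a ≤ b + 1) :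
    Finset.Icc a (b + 1) = insert (b + 1) (Finset.Icc a b) := by
  ext z
  simp only [Finset.mem_Icc, Finset.mem_insert]
  omega

lemma sum_Pfin (V : X d → ℝ) (ω : ℤ → Bool) (m₁ : ℤ) :
    ∀ (k : ℕ) (x : X d) (u : X d → ℝ),
      ∑ γ ∈ Pfin m₁ k x, Real.exp (Phi V ω m₁ (m₁ + k) γ) * u (γ m₁) =
        Sfun V ω m₁ k u x := by
  intro k
  induction k with
  | zero =>
      intro x u
      have h0 : (m₁ + ((0:ℕ) : ℤ)) = m₁ := by simp
      rw [h0]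
      show ∑ γ ∈ ({fun _ => x} : Finset (ℤ → X d)), Real.exp (Phi V ω m₁ m₁ γ) * u (γ m₁) = u x
      rw [Finset.sum_singleton]
      have hPhi : Phi V ω m₁ m₁ (fun _ => x) = 0 := by
        unfold Phi
        rw [Finset.Icc_eq_empty (by omega), Finset.sum_empty]
      rw [hPhi, Real.exp_zero, one_mul]
  | succ k ih =>
      intro x u
      have hc : (m₁ + ((k+1 : ℕ) : ℤ)) = m₁ + (k : ℤ) + 1 := by push_cast; ring
      rw [hc]
      show ∑ γ ∈ (nbr x).biUnion (fun z => (Pfin m₁ k z).image (pext (m₁ + k) x)),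
          Real.exp (Phi V ω m₁ (m₁ + (k:ℤ) + 1) γ) * u (γ m₁) = _
      rw [Finset.sum_biUnion]
      · have hinner : ∀ z ∈ nbr x,
            ∑ γ ∈ (Pfin m₁ k z).image (pext (m₁ + k) x),
              Real.exp (Phi V ω m₁ (m₁ + (k:ℤ) + 1) γ) * u (γ m₁) =
            Real.exp (V x * sgn (ω (m₁ + k + 1))) * Sfun V ω m₁ k u z := by
          intro z hz
          rw [Finset.sum_image]
          · rw [← ih z u, Finset.mul_sum]
            refine Finset.sum_congr rfl fun γ' hγ' => ?_
            obtain ⟨hA', hF', hE'⟩ := (mem_Pfin m₁ k z γ').1 hγ'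
            have hPhi : Phi V ω m₁ (m₁ + (k:ℤ) + 1) (pext (m₁ + k) x γ') =
                Phi V ω m₁ (m₁ + (k:ℤ)) γ' + V x * sgn (ω (m₁ + k + 1)) := by
              unfold Phi
              rw [Icc_int_succ_top (by omega), Finset.sum_insert (by simp)]
              have e1 : pext (m₁ + k) x γ' (m₁ + (k:ℤ) + 1) = x := if_neg (by omega)
              rw [e1]
              have e2 : ∀ n ∈ Finset.Icc (m₁ + 1) (m₁ + (k:ℤ)),
                  V (pext (m₁ + k) x γ' n) * sgn (ω n) = V (γ' n) * sgn (ω n) := by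
                intro n hn
                have hn' := Finset.mem_Icc.1 hn
                have : pext (m₁ + k) x γ' n = γ' n := if_pos (by omega)
                rw [this]
              rw [Finset.sum_congr rfl e2]
              ring
            have hstart : pext (m₁ + k) x γ' m₁ = γ' m₁ := if_pos (by omega)
            rw [hPhi, hstart, Real.exp_add]
            ring
          · intro γ₁ h₁ γ₂ h₂ hext
            obtain ⟨hA₁, hF₁, hE₁⟩ := (mem_Pfin m₁ k z γ₁).1 h₁
            obtain ⟨hA₂, hF₂, hE₂⟩ := (mem_Pfin m₁ k z γ₂).1 h₂
            funext n
            by_cases h : n ≤ m₁ + (k:ℤ)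
            · have := congrFun hext n
              rwa [pext, pext, if_pos h, if_pos h] at this
            · rw [hF₁.2 n (by omega), hF₂.2 n (by omega), hE₁, hE₂]
        rw [Finset.sum_congr rfl hinner, ← Finset.mul_sum]
        rfl
      · intro z₁ h₁ z₂ h₂ hne
        simp only [Function.onFun]
        rw [Finset.disjoint_left]
        intro γ hm₁' hm₂'
        obtain ⟨γ₁, hγ₁, he₁⟩ := Finset.mem_image.1 hm₁'
        obtain ⟨γ₂, hγ₂, he₂⟩ := Finset.mem_image.1 hm₂'
        have hE₁ := ((mem_Pfin m₁ k z₁ γ₁).1 hγ₁).2.2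
        have hE₂ := ((mem_Pfin m₁ k z₂ γ₂).1 hγ₂).2.2
        have hv₁ : γ (m₁ + (k:ℤ)) = z₁ := by
          rw [← he₁, pext, if_pos le_rfl, hE₁]
        have hv₂ : γ (m₁ + (k:ℤ)) = z₂ := by
          rw [← he₂, pext, if_pos le_rfl, hE₂]
        exact hne (by rw [← hv₁, hv₂])

lemma tsum_eq_Sfun (V : X d → ℝ) (ω : ℤ → Bool) (m₁ : ℤ) (k : ℕ) (x : X d) (u : X d → ℝ) :
    ∑' γ : {γ : ℤ → X d // Adm m₁ (m₁ + (k:ℤ)) γ ∧ Frozen m₁ (m₁ + (k:ℤ)) γ ∧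
        γ (m₁ + (k:ℤ)) = x},
      Real.exp (Phi V ω m₁ (m₁ + (k:ℤ)) γ.1) * u (γ.1 m₁) = Sfun V ω m₁ k u x := by
  have hset : {γ : ℤ → X d | Adm m₁ (m₁ + (k:ℤ)) γ ∧ Frozen m₁ (m₁ + (k:ℤ)) γ ∧
      γ (m₁ + (k:ℤ)) = x} = ↑(Pfin m₁ k x) := by
    ext γ
    rw [Finset.mem_coe, mem_Pfin]
    rfl
  rw [← sum_Pfin V ω m₁ k x u, ← Finset.tsum_subtype' (Pfin m₁ k x)
    (fun γ => Real.exp (Phi V ω m₁ (m₁ + (k:ℤ)) γ) * u (γ m₁))]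
  exact ((Equiv.setCongr hset).tsum_eq
    (fun γ : ↑(Pfin m₁ k x : Set (ℤ → X d)) => Real.exp (Phi V ω m₁ (m₁ + (k:ℤ)) γ.1) * u (γ.1 m₁)))

lemma T_eq_Sfun (V : X d → ℝ) (ω : ℤ → Bool) (m₁ : ℤ) (k : ℕ) (u : X d → ℝ) (x : X d) :
    T V ω m₁ (m₁ + (k:ℤ)) u x =
      ((2 * (d:ℝ) + 1) ^ ((k:ℤ)))⁻¹ * Sfun V ω m₁ k u x := by
  unfold T
  rw [add_sub_cancel_left, tsum_eq_Sfun]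

end Bridge

section SmallAux2

variable {d : ℕ} {M₀ M₁ : ℝ} {ω : ℤ → Bool}

lemma nm_le_iff {z : X d} {r : ℕ} : nm z ≤ r ↔ ∀ i, (z i).natAbs ≤ r := by
  rw [nm, Finset.sup_le_iff]
  exact ⟨fun h i => h i (Finset.mem_univ i), fun h i _ => h i⟩

lemma mem_ball_iff {z : X d} {r : ℕ} : z ∈ ball d r ↔ nm z ≤ r := by
  rw [nm_le_iff, ball, Fintype.mem_piFinset]
  constructor
  · intro h i; have := h i; rw [Finset.mem_Icc] at this; omega
  · intro h i; rw [Finset.mem_Icc]; have := h i; omega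

lemma l1_le_of_nm {z : X d} {r : ℕ} (h : nm z ≤ r) : ∑ i, (z i).natAbs ≤ d * r := by
  have h' := nm_le_iff.1 h
  calc ∑ i, (z i).natAbs ≤ ∑ _i : Fin d, r := Finset.sum_le_sum fun i _ => h' i
    _ = d * r := by simp [Finset.sum_const, Finset.card_univ, mul_comm]

lemma l1_sub_le (z w : X d) :
    ∑ i, (w i - z i).natAbs ≤ (∑ i, (w i).natAbs) + ∑ i, (z i).natAbs := by
  rw [← Finset.sum_add_distrib]
  exact Finset.sum_le_sum fun i _ => by omega

lemma l1_gstar_le (hd : 1 ≤ d) (n : ℤ) : ∑ i, ((gstar d ω n) i).natAbs ≤ 1 := by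
  unfold gstar
  split_ifs
  · simp
  · exact natAbs_e1_le hd

lemma xi_sum_right (hM0 : 0 ≤ M₀) (hM1 : 0 ≤ M₁) {L : ℝ} (hL : 0 ≤ L) {b : ℤ}
    (hG : ∀ k : ℕ, 1 ≤ k → (k : ℝ) * L < ∑ j ∈ Finset.Icc (b - k + 1) b, xi M₀ M₁ ω j)
    {a c : ℤ} (hac : a ≤ c) (hcb : c < b) :
    ((c - a : ℤ) : ℝ) * L - ((b - c : ℤ) : ℝ) * M₀ ≤ ∑ i ∈ Finset.Ioc a c, xi M₀ M₁ ω i := by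
  have hk : 1 ≤ (b - a).toNat := by omega
  have h1 := hG (b - a).toNat hk
  have hIcc : Finset.Icc (b - ((b - a).toNat : ℤ) + 1) b = Finset.Ioc a b := by
    rw [show b - ((b - a).toNat : ℤ) + 1 = a + 1 by omega, Icc_shift_Ioc]
  rw [hIcc] at h1
  have hsplit : ∑ i ∈ Finset.Ioc a c, xi M₀ M₁ ω i + ∑ i ∈ Finset.Ioc c b, xi M₀ M₁ ω i =
      ∑ i ∈ Finset.Ioc a b, xi M₀ M₁ ω i := by
    rw [← Finset.Ioc_union_Ioc_eq_Ioc hac (by omega : c ≤ b), Finset.sum_union]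
    rw [Finset.disjoint_left]
    intro t ht ht'
    simp only [Finset.mem_Ioc] at ht ht'
    omega
  have h2 : ∑ i ∈ Finset.Ioc c b, xi M₀ M₁ ω i ≤ ((b - c : ℤ) : ℝ) * M₀ :=
    sum_xi_le hM0 hM1 (by omega)
  have hcast : (((b - a).toNat : ℕ) : ℝ) = ((b - a : ℤ) : ℝ) := by norm_cast; omega
  rw [hcast] at h1
  have hba : ((c - a : ℤ) : ℝ) * L ≤ ((b - a : ℤ) : ℝ) * L := by
    refine mul_le_mul_of_nonneg_right ?_ hL
    exact_mod_cast (by omega : (c - a : ℤ) ≤ b - a)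
  linarith

lemma xi_sum_left (hM0 : 0 ≤ M₀) (hM1 : 0 ≤ M₁) {L : ℝ} (hL : 0 ≤ L) {b : ℤ}
    (hG : ∀ k : ℕ, 1 ≤ k → (k : ℝ) * L < ∑ j ∈ Finset.Icc (b + 1) (b + k), xi M₀ M₁ ω j)
    {a c : ℤ} (hba : b ≤ a) (hac : a < c) :
    ((c - b : ℤ) : ℝ) * L - ((a - b : ℤ) : ℝ) * M₀ ≤ ∑ i ∈ Finset.Ioc a c, xi M₀ M₁ ω i := by
  have hk : 1 ≤ (c - b).toNat := by omega
  have h1 := hG (c - b).toNat hk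
  have hIcc : Finset.Icc (b + 1) (b + ((c - b).toNat : ℤ)) = Finset.Ioc b c := by
    rw [show b + ((c - b).toNat : ℤ) = c by omega, Icc_shift_Ioc]
  rw [hIcc] at h1
  have hsplit : ∑ i ∈ Finset.Ioc b a, xi M₀ M₁ ω i + ∑ i ∈ Finset.Ioc a c, xi M₀ M₁ ω i =
      ∑ i ∈ Finset.Ioc b c, xi M₀ M₁ ω i := by
    rw [← Finset.Ioc_union_Ioc_eq_Ioc hba (by omega : a ≤ c), Finset.sum_union]
    rw [Finset.disjoint_left]
    intro t ht ht'
    simp only [Finset.mem_Ioc] at ht ht'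
    omega
  have h2 : ∑ i ∈ Finset.Ioc b a, xi M₀ M₁ ω i ≤ ((a - b : ℤ) : ℝ) * M₀ :=
    sum_xi_le hM0 hM1 (by omega)
  have hcast : (((c - b).toNat : ℕ) : ℝ) = ((c - b : ℤ) : ℝ) := by norm_cast; omega
  rw [hcast] at h1
  linarith

end SmallAux2

lemma le_exp_shift {a b c : ℝ} (h : Real.exp a * c ≤ b) : c ≤ Real.exp (-a) * b := by
  have h2 := mul_le_mul_of_nonneg_left h (Real.exp_pos (-a)).le
  rwa [← mul_assoc, ← Real.exp_add, neg_add_cancel, Real.exp_zero, one_mul] at h2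

/-- Lemma 3.4 (boundedness in the Hilbert metric). -/
theorem statement4
    (d : ℕ) (hd : 1 ≤ d) (M₀ M₁ : ℝ) (hM₀ : 0 ≤ M₀) (hM₁ : 0 ≤ M₁)
    (hl0 : 0 < (M₀ - 3 * M₁) / 2 - Real.log (2 * (d : ℝ) + 1))
    (lam : ℝ) (hlam : 0 < lam)
    (hlam' : lam < (M₀ - 3 * M₁) / 2 - Real.log (2 * (d : ℝ) + 1))
    (r : ℕ) :
    ∃ K₂ : ℝ, 1 ≤ K₂ ∧ ∃ S : ℕ,
      ∀ (V : X d → ℝ), V 0 = M₀ → (∀ x : X d, x ≠ 0 → |V x| ≤ M₁) →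
      ∀ (ω : ℤ → Bool) (m₁ m₂ : ℤ),
        Good d M₀ M₁ lam r m₁ m₂ ω → (S : ℤ) < m₂ - m₁ →
        ∀ φ : X d → ℝ, (∀ x, 0 ≤ φ x) → BddAbove (Set.range φ) → (∃ x, φ x ≠ 0) →
          (∀ x, r < nm x → ∃ z, nm z ≤ r ∧ φ x ≤ φ z) →
          ∀ y₁ y₂ : X d, nm y₁ ≤ r → nm y₂ ≤ r →
            1 / K₂ ≤ T V ω m₁ m₂ φ y₁ / T V ω m₁ m₂ φ y₂ ∧
            T V ω m₁ m₂ φ y₁ / T V ω m₁ m₂ φ y₂ ≤ K₂ := by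
  classical
  set Ld : ℝ := Real.log (2 * (d:ℝ) + 1) with hLd
  have hd1 : (1:ℝ) ≤ (d:ℝ) := by exact_mod_cast hd
  have hpos21 : (0:ℝ) < 2 * (d:ℝ) + 1 := by linarith
  have hLd0 : 0 ≤ Ld := by rw [hLd]; exact Real.log_nonneg (by linarith)
  have hM10 : M₁ ≤ M₀ := by nlinarith
  set ρ : ℕ := d * r + 1 with hρ
  have hρr : r + 1 ≤ ρ := by
    have : 1 * r ≤ d * r := Nat.mul_le_mul_right r hd
    omega
  set Lg : ℝ := M₁ + lam + Ld with hLg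
  have hLg0 : 0 ≤ Lg := by rw [hLg]; linarith
  set Cgeo : ℝ := (1 - Real.exp (-lam))⁻¹ with hCg
  have hexplam : Real.exp (-lam) < 1 := by
    rw [← Real.exp_zero]; exact Real.exp_lt_exp.2 (by linarith)
  have hCg0 : 0 < Cgeo := by rw [hCg]; exact inv_pos.2 (by linarith)
  set Cmid : ℝ := Real.exp ((r:ℝ) * Lg + (2*(ρ:ℝ) - r) * M₀) +
    Real.exp (((ρ:ℝ) - r) * M₀) * Cgeo with hCm
  have hCmid0 : 0 < Cmid := by
    rw [hCm]; positivity
  set E : ℝ := Real.exp ((ρ:ℝ) * (M₀ + Ld)) * Cmid with hE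
  have hE0 : 0 < E := by rw [hE]; positivity
  set Kb : ℝ := Real.exp ((ρ:ℝ) * M₀) * E with hKb
  have hKb0 : 0 < Kb := by rw [hKb]; positivity
  clear_value Ld ρ Lg Cgeo Cmid E Kb
  refine ⟨max 1 Kb, le_max_left _ _, 2 * ρ, ?_⟩
  intro V hV0 hV1 ω m₁ m₂ hGood hS φ hφ0 _hφbdd hφne hφsup y₁ y₂ hy₁ hy₂
  obtain ⟨hm, _hG1, hG2, _hG3, hG4⟩ := hGood
  have hVabs : ∀ x : X d, |V x| ≤ M₀ := absV_le_M0 hV0 hV1 hM₀ hM10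
  -- fold the Good sums into Lg
  have hfold : M₁ + lam + Real.log (2 * (d:ℝ) + 1) = Lg := by rw [hLg, hLd]
  rw [hfold] at hG2 hG4
  -- index bookkeeping
  set KT : ℕ := (m₂ - m₁).toNat with hKTdef
  have hKT : m₂ = m₁ + (KT : ℤ) := by omega
  have hKTbig : 2 * ρ + 1 ≤ KT := by
    have : ((2 * ρ : ℕ) : ℤ) < m₂ - m₁ := hS
    omega
  set K : ℕ := KT - ρ with hKdef
  clear_value KT K
  have hKsplit : KT = K + ρ := by omega
  have hρK : ρ + 1 ≤ K := by omega
  have hrK : r + 1 ≤ K := by omega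
  -- c₀ and z₀
  set c₀ : ℝ := (ball d r).sup' (ball_nonempty d r) φ with hc₀def
  clear_value c₀
  have hub : ∀ x, φ x ≤ c₀ := by
    intro x
    rw [hc₀def]
    by_cases hx : nm x ≤ r
    · exact Finset.le_sup' φ (mem_ball_iff.2 hx)
    · obtain ⟨z, hz, hzx⟩ := hφsup x (by omega)
      exact le_trans hzx (Finset.le_sup' φ (mem_ball_iff.2 hz))

  obtain ⟨z₀, hz₀mem, hz₀⟩ := Finset.exists_mem_eq_sup' (ball_nonempty d r) φ
  have hc0z : c₀ = φ z₀ := by rw [hc₀def, hz₀]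
  have hc₀0 : 0 < c₀ := by
    obtain ⟨x, hx⟩ := hφne
    exact lt_of_lt_of_le (lt_of_le_of_ne (hφ0 x) (Ne.symm hx)) (hub x)
  have hc₀nn : 0 ≤ c₀ := hc₀0.le
  set G : ℝ := Sfun V ω m₁ K φ (gstar d ω (m₁ + (K:ℤ))) with hGdef
  clear_value G
  have hGnn : 0 ≤ G := by rw [hGdef]; exact Sfun_nonneg hφ0 _ _
  -- conversion of ℕ-indexed xi sums to ℤ-intervals
  have hconv : ∀ j : ℕ, (∑ n ∈ Finset.Icc (j+1) K, xi M₀ M₁ ω (m₁ + n)) =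
      ∑ i ∈ Finset.Ioc (m₁ + (j:ℤ)) (m₁ + (K:ℤ)), xi M₀ M₁ ω i := by
    intro j
    rw [sum_shift (xi M₀ M₁ ω) m₁ (j+1) K,
      show (m₁ + ((j+1:ℕ):ℤ)) = (m₁ + (j:ℤ)) + 1 by push_cast; ring, Icc_shift_Ioc]
  -- xi-sum lower bounds from goodness
  have hxiR : ∀ j : ℕ, j ≤ K →
      ((K:ℝ) - j) * Lg - ((ρ:ℝ) - r) * M₀ ≤
        ∑ i ∈ Finset.Ioc (m₁ + (j:ℤ)) (m₁ + (K:ℤ)), xi M₀ M₁ ω i := by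
    intro j hj
    have h := xi_sum_right hM₀ hM₁ hLg0 (b := m₂ - r) hG4
      (a := m₁ + (j:ℤ)) (c := m₁ + (K:ℤ)) (by omega) (by omega)
    have e1 : ((m₁ + (K:ℤ) - (m₁ + (j:ℤ)) : ℤ) : ℝ) = (K:ℝ) - j := by push_cast; ring
    have e2 : ((m₂ - r - (m₁ + (K:ℤ)) : ℤ) : ℝ) = (ρ:ℝ) - r := by
      have : (m₂ - r - (m₁ + (K:ℤ)) : ℤ) = (ρ:ℤ) - r := by omega
      rw [this]; push_cast; ring
    rw [e1, e2] at h
    exact h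
  have hxiL : ((K:ℝ) - r) * Lg - ((ρ:ℝ) - r) * M₀ ≤
      ∑ i ∈ Finset.Ioc (m₁ + (ρ:ℤ)) (m₁ + (K:ℤ)), xi M₀ M₁ ω i := by
    have h := xi_sum_left hM₀ hM₁ hLg0 (b := m₁ + r) hG2
      (a := m₁ + (ρ:ℤ)) (c := m₁ + (K:ℤ)) (by omega) (by omega)
    have e1 : ((m₁ + (K:ℤ) - (m₁ + (r:ℤ)) : ℤ) : ℝ) = (K:ℝ) - r := by push_cast; ring
    have e2 : ((m₁ + (ρ:ℤ) - (m₁ + (r:ℤ)) : ℤ) : ℝ) = (ρ:ℝ) - r := by push_cast; ring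
    rw [e1, e2] at h
    exact h
  -- bound G_j by G
  have hGjle : ∀ j : ℕ, j ≤ K → Sfun V ω m₁ j φ (gstar d ω (m₁ + (j:ℤ))) ≤
      Real.exp (((ρ:ℝ) - r) * M₀ - ((K:ℝ) - j) * Lg) * G := by
    intro j hj
    rw [hGdef]
    have hch := Sfun_gstar_chain (ω := ω) (m₁ := m₁) (u := φ) hd hφ0 hV0 hV1 j K hj
    rw [hconv j] at hch
    have h2 := le_exp_shift hch
    refine le_trans h2 (mul_le_mul_of_nonneg_right (Real.exp_le_exp.2 ?_) (Sfun_nonneg hφ0 _ _))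
    have := hxiR j hj
    linarith
  -- bound c₀ by G (left end)
  have hdistz0 : ∑ i, ((gstar d ω (m₁ + (ρ:ℤ))) i - z₀ i).natAbs ≤ ρ := by
    have h1 := l1_gstar_le (ω := ω) hd (m₁ + (ρ:ℤ))
    have h2 := l1_le_of_nm (mem_ball_iff.1 hz₀mem)
    have h3 := l1_sub_le z₀ (gstar d ω (m₁ + (ρ:ℤ)))
    omega
  have hSρ : Real.exp (-(ρ:ℝ) * M₀) * c₀ ≤
      Sfun V ω m₁ ρ φ (gstar d ω (m₁ + (ρ:ℤ))) := by
    have h := Sfun_dist (V := V) (ω := ω) (m₁ := m₁) hφ0 hVabs ρ 0 z₀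
      (gstar d ω (m₁ + (ρ:ℤ))) hdistz0
    rw [Nat.zero_add] at h
    rwa [show Sfun V ω m₁ 0 φ z₀ = φ z₀ from rfl, ← hc0z] at h
  have hchainL := Sfun_gstar_chain (ω := ω) (m₁ := m₁) (u := φ) hd hφ0 hV0 hV1 ρ K (by omega)
  rw [hconv ρ] at hchainL
  have hGlow : Real.exp (((K:ℝ) - r) * Lg - ((ρ:ℝ) - r) * M₀) *
      (Real.exp (-(ρ:ℝ) * M₀) * c₀) ≤ G := by
    calc Real.exp (((K:ℝ) - r) * Lg - ((ρ:ℝ) - r) * M₀) * (Real.exp (-(ρ:ℝ) * M₀) * c₀)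
        ≤ Real.exp (((K:ℝ) - r) * Lg - ((ρ:ℝ) - r) * M₀) *
            Sfun V ω m₁ ρ φ (gstar d ω (m₁ + (ρ:ℤ))) :=
          mul_le_mul_of_nonneg_left hSρ (Real.exp_pos _).le
      _ ≤ Real.exp (∑ i ∈ Finset.Ioc (m₁ + (ρ:ℤ)) (m₁ + (K:ℤ)), xi M₀ M₁ ω i) *
            Sfun V ω m₁ ρ φ (gstar d ω (m₁ + (ρ:ℤ))) :=
          mul_le_mul_of_nonneg_right (Real.exp_le_exp.2 hxiL) (Sfun_nonneg hφ0 _ _)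
      _ ≤ G := by rw [hGdef]; exact hchainL
  have hGpos : 0 < G :=
    lt_of_lt_of_le (mul_pos (Real.exp_pos _) (mul_pos (Real.exp_pos _) hc₀0)) hGlow
  have hc₀le : c₀ ≤ Real.exp (((ρ:ℝ) - r) * M₀ + (ρ:ℝ) * M₀ - ((K:ℝ) - r) * Lg) * G := by
    have h' : Real.exp ((((K:ℝ) - r) * Lg - ((ρ:ℝ) - r) * M₀) + (-(ρ:ℝ) * M₀)) * c₀ ≤ G := by
      rw [Real.exp_add, mul_assoc]; exact hGlow
    have h2 := le_exp_shift h'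
    rwa [show -((((K:ℝ) - r) * Lg - ((ρ:ℝ) - r) * M₀) + (-(ρ:ℝ) * M₀)) =
      ((ρ:ℝ) - r) * M₀ + (ρ:ℝ) * M₀ - ((K:ℝ) - r) * Lg from by ring] at h2
  -- pointwise bound at time K
  have hβ : ((2*(d:ℝ)+1) * Real.exp M₁) = Real.exp (M₁ + Ld) := by
    rw [Real.exp_add, hLd, Real.exp_log hpos21]; ring
  have hUK : ∀ x, Sfun V ω m₁ K φ x ≤ Cmid * G := by
    intro x
    have h1 := Sfun_upper1 (ω := ω) (m₁ := m₁) hV0 hV1 hM₀ hM₁ hφ0 hc₀nn hub K x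
    have hterm1 : c₀ * ((2*(d:ℝ)+1) * Real.exp M₁) ^ K ≤
        Real.exp ((r:ℝ) * Lg + (2*(ρ:ℝ) - r) * M₀) * G := by
      have hpow : ((2*(d:ℝ)+1) * Real.exp M₁) ^ K = Real.exp ((K:ℝ) * (M₁ + Ld)) := by
        rw [hβ, ← Real.exp_nat_mul]
      calc c₀ * ((2*(d:ℝ)+1) * Real.exp M₁) ^ K
          ≤ (Real.exp (((ρ:ℝ) - r) * M₀ + (ρ:ℝ) * M₀ - ((K:ℝ) - r) * Lg) * G) *
              Real.exp ((K:ℝ) * (M₁ + Ld)) := by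
            rw [hpow]
            exact mul_le_mul_of_nonneg_right hc₀le (Real.exp_pos _).le
        _ = Real.exp ((((ρ:ℝ) - r) * M₀ + (ρ:ℝ) * M₀ - ((K:ℝ) - r) * Lg) +
              (K:ℝ) * (M₁ + Ld)) * G := by rw [Real.exp_add]; ring
        _ ≤ Real.exp ((r:ℝ) * Lg + (2*(ρ:ℝ) - r) * M₀) * G := by
            refine mul_le_mul_of_nonneg_right (Real.exp_le_exp.2 ?_) hGnn
            have hKlam : 0 ≤ (K:ℝ) * lam := by positivity
            have hsub : M₁ + Ld = Lg - lam := by rw [hLg]; ring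
            rw [hsub]
            have hexp : ((((ρ:ℝ) - r) * M₀ + (ρ:ℝ) * M₀ - ((K:ℝ) - r) * Lg) +
                (K:ℝ) * (Lg - lam)) =
                ((r:ℝ) * Lg + (2*(ρ:ℝ) - r) * M₀) - (K:ℝ) * lam := by ring
            linarith [hKlam, hexp]
    have hterm2 : (∑ j ∈ Finset.Icc 1 K, ((2*(d:ℝ)+1) * Real.exp M₁) ^ (K - j) *
        Sfun V ω m₁ j φ (gstar d ω (m₁ + (j:ℤ)))) ≤
          Real.exp (((ρ:ℝ) - r) * M₀) * Cgeo * G := by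
      have hper : ∀ j ∈ Finset.Icc 1 K,
          ((2*(d:ℝ)+1) * Real.exp M₁) ^ (K - j) *
            Sfun V ω m₁ j φ (gstar d ω (m₁ + (j:ℤ))) ≤
          (Real.exp (((ρ:ℝ) - r) * M₀) * G) * Real.exp (-(((K:ℝ) - j) * lam)) := by
        intro j hj
        have hjK : j ≤ K := (Finset.mem_Icc.1 hj).2
        have hpow : ((2*(d:ℝ)+1) * Real.exp M₁) ^ (K - j) =
            Real.exp (((K:ℝ) - j) * (M₁ + Ld)) := by
          rw [hβ, ← Real.exp_nat_mul, Nat.cast_sub hjK]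
        have hGj := hGjle j hjK
        calc ((2*(d:ℝ)+1) * Real.exp M₁) ^ (K - j) *
              Sfun V ω m₁ j φ (gstar d ω (m₁ + (j:ℤ)))
            = Real.exp (((K:ℝ) - j) * (M₁ + Ld)) *
              Sfun V ω m₁ j φ (gstar d ω (m₁ + (j:ℤ))) := by rw [hpow]
          _ ≤ Real.exp (((K:ℝ) - j) * (M₁ + Ld)) *
              (Real.exp (((ρ:ℝ) - r) * M₀ - ((K:ℝ) - j) * Lg) * G) :=
              mul_le_mul_of_nonneg_left hGj (Real.exp_pos _).le
          _ = (Real.exp (((ρ:ℝ) - r) * M₀) * G) * Real.exp (-(((K:ℝ) - j) * lam)) := by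
              rw [← mul_assoc, ← Real.exp_add,
                show ((K:ℝ) - j) * (M₁ + Ld) + (((ρ:ℝ) - r) * M₀ - ((K:ℝ) - j) * Lg) =
                  ((ρ:ℝ) - r) * M₀ + (-(((K:ℝ) - j) * lam)) from by rw [hLg]; ring,
                Real.exp_add]
              ring
      calc (∑ j ∈ Finset.Icc 1 K, ((2*(d:ℝ)+1) * Real.exp M₁) ^ (K - j) *
              Sfun V ω m₁ j φ (gstar d ω (m₁ + (j:ℤ))))
          ≤ ∑ j ∈ Finset.Icc 1 K,
              (Real.exp (((ρ:ℝ) - r) * M₀) * G) * Real.exp (-(((K:ℝ) - j) * lam)) :=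
            Finset.sum_le_sum hper
        _ = (Real.exp (((ρ:ℝ) - r) * M₀) * G) *
              ∑ j ∈ Finset.Icc 1 K, Real.exp (-(((K:ℝ) - j) * lam)) := by
            rw [Finset.mul_sum]
        _ ≤ (Real.exp (((ρ:ℝ) - r) * M₀) * G) * Cgeo := by
            refine mul_le_mul_of_nonneg_left ?_
              (mul_nonneg (Real.exp_pos _).le hGnn)
            have hre : ∀ j ∈ Finset.Icc 1 K,
                Real.exp (-(((K:ℝ) - j) * lam)) = (Real.exp (-lam)) ^ (K - j) := by
              intro j hj
              have hjK : j ≤ K := (Finset.mem_Icc.1 hj).2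
              rw [← Real.exp_nat_mul, Nat.cast_sub hjK]
              congr 1
              ring
            rw [Finset.sum_congr rfl hre]
            have hbij : ∑ j ∈ Finset.Icc 1 K, (Real.exp (-lam)) ^ (K - j) =
                ∑ i ∈ Finset.range K, (Real.exp (-lam)) ^ i := by
              refine Finset.sum_nbij' (fun j => K - j) (fun i => K - i) ?_ ?_ ?_ ?_ ?_
              · intro j hj; simp only [Finset.mem_Icc] at hj
                simp only [Finset.mem_range]; omega
              · intro i hi; simp only [Finset.mem_range] at hi
                simp only [Finset.mem_Icc]; omega
              · intro j hj; simp only [Finset.mem_Icc] at hj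
                show K - (K - j) = j
                omega
              · intro i hi; simp only [Finset.mem_range] at hi
                show K - (K - i) = i
                omega
              · intro j _; rfl
            rw [hbij, hCg]
            exact geom_bound (Real.exp_pos _).le hexplam K
        _ = Real.exp (((ρ:ℝ) - r) * M₀) * Cgeo * G := by ring
    calc Sfun V ω m₁ K φ x
        ≤ c₀ * ((2*(d:ℝ)+1) * Real.exp M₁) ^ K +
          ∑ j ∈ Finset.Icc 1 K, ((2*(d:ℝ)+1) * Real.exp M₁) ^ (K - j) *
            Sfun V ω m₁ j φ (gstar d ω (m₁ + (j:ℤ))) := h1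
      _ ≤ Real.exp ((r:ℝ) * Lg + (2*(ρ:ℝ) - r) * M₀) * G +
          Real.exp (((ρ:ℝ) - r) * M₀) * Cgeo * G := add_le_add hterm1 hterm2
      _ = Cmid * G := by rw [hCm]; ring
  -- upper bound at time KT
  have hUtop : ∀ x, Sfun V ω m₁ KT φ x ≤ E * G := by
    intro x
    have h2 := Sfun_upper2 (m₁ := m₁) hφ0 hVabs (K := K) (U := Cmid * G)
      (mul_nonneg hCmid0.le hGnn) hUK ρ x
    rw [← hKsplit] at h2
    have hκ : ((2*(d:ℝ)+1) * Real.exp M₀) ^ ρ = Real.exp ((ρ:ℝ) * (M₀ + Ld)) := by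
      rw [show (2*(d:ℝ)+1) * Real.exp M₀ = Real.exp (M₀ + Ld) from by
        rw [Real.exp_add, hLd, Real.exp_log hpos21]; ring, ← Real.exp_nat_mul]
    calc Sfun V ω m₁ KT φ x ≤ ((2*(d:ℝ)+1) * Real.exp M₀) ^ ρ * (Cmid * G) := h2
      _ = E * G := by rw [hκ, hE]; ring
  -- lower bound at time KT for points in the ball
  have hLow : ∀ y : X d, nm y ≤ r →
      Real.exp (-(ρ:ℝ) * M₀) * G ≤ Sfun V ω m₁ KT φ y := by
    intro y hy
    have hdisty : ∑ i, (y i - (gstar d ω (m₁ + (K:ℤ))) i).natAbs ≤ ρ := by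
      have h1 := l1_gstar_le (ω := ω) hd (m₁ + (K:ℤ))
      have h2 := l1_le_of_nm hy
      have h3 := l1_sub_le (gstar d ω (m₁ + (K:ℤ))) y
      omega
    have h := Sfun_dist (V := V) (ω := ω) (m₁ := m₁) hφ0 hVabs ρ K
      (gstar d ω (m₁ + (K:ℤ))) y hdisty
    rw [← hKsplit] at h
    rw [hGdef]
    exact h
  -- conclude
  rw [hKT, T_eq_Sfun, T_eq_Sfun]
  have hA₁u := hUtop y₁
  have hA₂u := hUtop y₂
  have hA₁l := hLow y₁ hy₁
  have hA₂l := hLow y₂ hy₂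
  have hexpρG : 0 < Real.exp (-(ρ:ℝ) * M₀) * G := mul_pos (Real.exp_pos _) hGpos
  have hA₁pos : 0 < Sfun V ω m₁ KT φ y₁ := lt_of_lt_of_le hexpρG hA₁l
  have hA₂pos : 0 < Sfun V ω m₁ KT φ y₂ := lt_of_lt_of_le hexpρG hA₂l
  have hcpos : (0:ℝ) < ((2 * (d:ℝ) + 1) ^ ((KT:ℤ)))⁻¹ :=
    inv_pos.2 (zpow_pos hpos21 _)
  rw [mul_div_mul_left _ _ (ne_of_gt hcpos)]
  have hone : Real.exp ((ρ:ℝ) * M₀) * Real.exp (-(ρ:ℝ) * M₀) = 1 := by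
    rw [← Real.exp_add, show (ρ:ℝ) * M₀ + -(ρ:ℝ) * M₀ = 0 from by ring, Real.exp_zero]
  have hEG : E * G = (Real.exp ((ρ:ℝ) * M₀) * E) * (Real.exp (-(ρ:ℝ) * M₀) * G) := by
    calc E * G = (Real.exp ((ρ:ℝ) * M₀) * Real.exp (-(ρ:ℝ) * M₀)) * (E * G) := by
          rw [hone, one_mul]
      _ = _ := by ring
  have hKbK2 : Real.exp ((ρ:ℝ) * M₀) * E ≤ max 1 Kb := by
    rw [← hKb]; exact le_max_right _ _
  have hK2pos : (0:ℝ) < max 1 Kb := lt_of_lt_of_le one_pos (le_max_left _ _)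
  constructor
  · rw [div_le_div_iff₀ hK2pos hA₂pos]
    calc 1 * Sfun V ω m₁ KT φ y₂ = Sfun V ω m₁ KT φ y₂ := one_mul _
      _ ≤ E * G := hA₂u
      _ = (Real.exp ((ρ:ℝ) * M₀) * E) * (Real.exp (-(ρ:ℝ) * M₀) * G) := hEG
      _ ≤ (Real.exp ((ρ:ℝ) * M₀) * E) * Sfun V ω m₁ KT φ y₁ :=
          mul_le_mul_of_nonneg_left hA₁l (by positivity)
      _ ≤ (max 1 Kb) * Sfun V ω m₁ KT φ y₁ :=
          mul_le_mul_of_nonneg_right hKbK2 hA₁pos.le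
      _ = Sfun V ω m₁ KT φ y₁ * max 1 Kb := mul_comm _ _
  · rw [div_le_iff₀ hA₂pos]
    calc Sfun V ω m₁ KT φ y₁ ≤ E * G := hA₁u
      _ = (Real.exp ((ρ:ℝ) * M₀) * E) * (Real.exp (-(ρ:ℝ) * M₀) * G) := hEG
      _ ≤ (max 1 Kb) * (Real.exp (-(ρ:ℝ) * M₀) * G) :=
          mul_le_mul_of_nonneg_right hKbK2 hexpρG.le
      _ ≤ (max 1 Kb) * Sfun V ω m₁ KT φ y₂ :=
          mul_le_mul_of_nonneg_left hA₂l hK2pos.le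


end BKpaper
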